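/- Let f(x) = ax + b and g(x) = cx + d be affine maps of ℝ with a > 1 and c > 1 and suppose 1/a + 1/c ≤ 1. Then either f and g commute (f ∘ g = g ∘ f), or the semigroup generated by f and g is free of rank 2 with free basis f, g. -/

import Mathlib

/-- Composition of the maps indexed by a word. -/
private def wordMap (f g : ℝ → ℝ) (w : List (Fin 2)) : ℝ → ℝ :=
  (w.map ![f, g]).foldr (· ∘ ·) id

private def wordInv (F G : ℝ → ℝ) : List (Fin 2) → ℝ → ℝ
  | [], z => z
  | i :: w, z => wordInv F G w (![F, G] i z)

private lemma wordMap_cons (f g : ℝ → ℝ) (i : Fin 2) (w : List (Fin 2)) :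
    wordMap f g (i :: w) = ![f, g] i ∘ wordMap f g w := rfl

private lemma wordMap_concat (f g : ℝ → ℝ) (w : List (Fin 2)) (i : Fin 2) :
    wordMap f g (w ++ [i]) = wordMap f g w ∘ ![f, g] i := by
  induction w with
  | nil => rfl
  | cons j w ih =>
      rw [List.cons_append, wordMap_cons, ih, wordMap_cons]
      rfl

/-- every word gives an affine map with slope ≥ 1, and > 1 if nonempty -/
private lemma wordMap_slope (a b c d : ℝ) (f g : ℝ → ℝ)
    (ha : 1 < a) (hc : 1 < c)
    (hf : f = fun x => a * x + b) (hg : g = fun x => c * x + d)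
    (w : List (Fin 2)) :
    ∃ A B : ℝ, (wordMap f g w = fun x => A * x + B) ∧ 1 ≤ A ∧ (w ≠ [] → 1 < A) := by
  induction w with
  | nil =>
      exact ⟨1, 0, by funext x; simp [wordMap], le_refl 1, fun h => absurd rfl h⟩
  | cons i w ih =>
      obtain ⟨A, B, hAB, hA, _⟩ := ih
      fin_cases i
      · refine ⟨a * A, a * B + b, ?_, ?_, fun _ => ?_⟩
        · funext x
          rw [wordMap_cons, hAB]
          simp [hf]; ring
        · nlinarith
        · nlinarith
      · refine ⟨c * A, c * B + d, ?_, ?_, fun _ => ?_⟩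
        · funext x
          rw [wordMap_cons, hAB]
          simp [hg]; ring
        · nlinarith
        · nlinarith

/-- Ping-pong core: words ending in different letters can't agree. -/
private lemma noMix (a b c d : ℝ) (f g : ℝ → ℝ)
    (ha : 1 < a) (hc : 1 < c)
    (hf : f = fun x => a * x + b) (hg : g = fun x => c * x + d)
    (hsum : 1 / a + 1 / c ≤ 1)
    (hpq : b / (1 - a) < d / (1 - c))
    (u v : List (Fin 2))
    (h : wordMap f g u ∘ f = wordMap f g v ∘ g) : False := by
  have ha0 : (0:ℝ) < a := by linarith
  have hc0 : (0:ℝ) < c := by linarith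
  set p : ℝ := b / (1 - a) with hp
  set q : ℝ := d / (1 - c) with hq
  have h1a : (1:ℝ) - a ≠ 0 := by intro h; nlinarith
  have h1c : (1:ℝ) - c ≠ 0 := by intro h; nlinarith
  have hfixp : a * p + b = p := by
    rw [hp]; field_simp; ring
  have hfixq : c * q + d = q := by
    rw [hq]; field_simp; ring
  have hδ : 0 < q - p := by linarith
  set F : ℝ → ℝ := fun z => p + (z - p) / a with hF
  set G : ℝ → ℝ := fun z => q + (z - q) / c with hG
  have hfF : ∀ z, f (F z) = z := by
    intro z; rw [hf, hF]; simp only; field_simp; linarith [hfixp]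
  have hgG : ∀ z, g (G z) = z := by
    intro z; rw [hg, hG]; simp only; field_simp; linarith [hfixq]
  have hGg : ∀ x, G (g x) = x := by
    intro x
    rw [hg, hG]; simp only
    have : c * x + d - q = c * (x - q) := by linarith [hfixq]
    rw [this, mul_div_cancel_left₀ _ (ne_of_gt hc0)]
    linarith [hfixq]
  -- basic interval bounds
  have hFmem : ∀ z, z ∈ Set.Icc p q → F z ∈ Set.Icc p (p + (q - p) / a) := by
    intro z hz
    obtain ⟨h1, h2⟩ := hz
    constructor
    · have : 0 ≤ (z - p) / a := div_nonneg (by linarith) (le_of_lt ha0)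
      simp only [hF]; linarith
    · have : (z - p) / a ≤ (q - p) / a := by
        gcongr
      simp only [hF]; linarith
  have hGmem : ∀ z, z ∈ Set.Icc p q → G z ∈ Set.Icc (q - (q - p) / c) q := by
    intro z hz
    obtain ⟨h1, h2⟩ := hz
    constructor
    · have : (p - q) / c ≤ (z - q) / c := by
        gcongr
      simp only [hG]
      have : -((q - p) / c) ≤ (z - q) / c := by
        rw [show -((q - p)/c) = (p - q)/c by ring]; exact this
      linarith
    · have : (z - q) / c ≤ 0 := div_nonpos_of_nonpos_of_nonneg (by linarith) (le_of_lt hc0)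
      simp only [hG]; linarith
  have hmle : p + (q - p) / a ≤ q - (q - p) / c := by
    have h1 : (q - p) / a + (q - p) / c ≤ q - p := by
      have : (q - p) / a + (q - p) / c = (q - p) * (1 / a + 1 / c) := by ring
      rw [this]
      calc (q - p) * (1 / a + 1 / c) ≤ (q - p) * 1 :=
            mul_le_mul_of_nonneg_left hsum (le_of_lt hδ)
        _ = q - p := mul_one _
    linarith
  have hsub : p + (q - p) / a ≤ q := by
    have : 0 ≤ (q - p) / c := div_nonneg (le_of_lt hδ) (le_of_lt hc0)
    linarith
  have hsub2 : p ≤ q - (q - p) / c := by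
    have : 0 ≤ (q - p) / a := div_nonneg (le_of_lt hδ) (le_of_lt ha0)
    linarith
  -- the inverse word map stays in [p,q] and is a right inverse of wordMap
  have hinv : ∀ w : List (Fin 2), ∀ z ∈ Set.Icc p q,
      wordInv F G w z ∈ Set.Icc p q ∧ wordMap f g w (wordInv F G w z) = z := by
    intro w
    induction w with
    | nil => intro z hz; exact ⟨hz, rfl⟩
    | cons i w ih =>
        intro z hz
        have hstep : ![F, G] i z ∈ Set.Icc p q := by
          fin_cases i
          · have := hFmem z hz
            simp only [Matrix.cons_val_zero]
            exact ⟨this.1, le_trans this.2 hsub⟩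
          · have := hGmem z hz
            simp only [Matrix.cons_val_one, Matrix.head_cons]
            exact ⟨le_trans hsub2 this.1, this.2⟩
        obtain ⟨hmem, heq⟩ := ih (![F, G] i z) hstep
        refine ⟨by simpa [wordInv] using hmem, ?_⟩
        have : wordInv F G (i :: w) z = wordInv F G w (![F, G] i z) := rfl
        rw [this, wordMap_cons]
        simp only [Function.comp_apply]
        rw [heq]
        fin_cases i
        · simpa using hfF z
        · simpa using hgG z
  -- key: wordInv u z = q for all z in [p,q]
  have key : ∀ z ∈ Set.Icc p q, wordInv F G u z = q := by
    intro z hz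
    obtain ⟨humem, hueq⟩ := hinv u z hz
    obtain ⟨hvmem, hveq⟩ := hinv v z hz
    have h1 := congrFun h (F (wordInv F G u z))
    simp only [Function.comp_apply] at h1
    rw [hfF, hueq] at h1
    -- h1 : z = wordMap f g v (g (F (wordInv F G u z)))
    obtain ⟨A, B, hAB, hA, _⟩ := wordMap_slope a b c d f g ha hc hf hg v
    have hinj : Function.Injective (wordMap f g v) := by
      rw [hAB]
      intro x y hxy
      simp only at hxy
      have hA0 : (0:ℝ) < A := by linarith
      nlinarith
    have heq2 : wordInv F G v z = g (F (wordInv F G u z)) := by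
      apply hinj
      rw [hveq, ← h1]
    have heq3 : G (wordInv F G v z) = F (wordInv F G u z) := by
      rw [heq2, hGg]
    have hF1 := hFmem _ humem
    have hG1 := hGmem _ hvmem
    have hFq : F (wordInv F G u z) = p + (q - p) / a := by
      have h4 : q - (q - p) / c ≤ F (wordInv F G u z) := by
        rw [← heq3]; exact hG1.1
      have h5 : F (wordInv F G u z) ≤ p + (q - p) / a := hF1.2
      linarith
    have : (wordInv F G u z - p) / a = (q - p) / a := by
      have : p + (wordInv F G u z - p) / a = p + (q - p) / a := hFq
      linarith
    rw [div_eq_div_iff (ne_of_gt ha0) (ne_of_gt ha0)] at this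
    have h6 : wordInv F G u z - p = q - p := mul_right_cancel₀ (ne_of_gt ha0) this
    linarith
  have hpmem : p ∈ Set.Icc p q := ⟨le_refl p, le_of_lt hpq⟩
  have hqmem : q ∈ Set.Icc p q := ⟨le_of_lt hpq, le_refl q⟩
  have e1 : wordMap f g u q = p := by
    have := (hinv u p hpmem).2
    rwa [key p hpmem] at this
  have e2 : wordMap f g u q = q := by
    have := (hinv u q hqmem).2
    rwa [key q hqmem] at this
  rw [e1] at e2
  exact absurd e2 (ne_of_lt hpq)

/-- injectivity of wordMap under the fixed point ordering hypothesis -/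
private lemma coreLemma (a b c d : ℝ) (f g : ℝ → ℝ)
    (ha : 1 < a) (hc : 1 < c)
    (hf : f = fun x => a * x + b) (hg : g = fun x => c * x + d)
    (hsum : 1 / a + 1 / c ≤ 1)
    (hpq : b / (1 - a) < d / (1 - c)) :
    ∀ n : ℕ, ∀ w₁ w₂ : List (Fin 2), w₁.length + w₂.length ≤ n →
      wordMap f g w₁ = wordMap f g w₂ → w₁ = w₂ := by
  have ha0 : (0:ℝ) < a := by linarith
  have hc0 : (0:ℝ) < c := by linarith
  have hsurj : ∀ i : Fin 2, Function.Surjective (![f, g] i) := by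
    intro i
    fin_cases i
    · intro y
      refine ⟨(y - b) / a, ?_⟩
      simp [hf]; field_simp; ring
    · intro y
      refine ⟨(y - d) / c, ?_⟩
      simp [hg]; field_simp; ring
  have hid : ∀ w : List (Fin 2), wordMap f g w = id → w = [] := by
    intro w hw
    by_contra hne
    obtain ⟨A, B, hAB, _, hA⟩ := wordMap_slope a b c d f g ha hc hf hg w
    have hA1 := hA hne
    have h0 := congrFun (hAB ▸ hw) 0
    have h1 := congrFun (hAB ▸ hw) 1
    simp at h0 h1
    nlinarith
  intro n
  induction n with
  | zero =>
      intro w₁ w₂ hlen _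
      have h1 : w₁ = [] := List.length_eq_zero_iff.mp (by omega)
      have h2 : w₂ = [] := List.length_eq_zero_iff.mp (by omega)
      rw [h1, h2]
  | succ n ih =>
      intro w₁ w₂ hlen heq
      rcases List.eq_nil_or_concat w₁ with rfl | ⟨u, i, rfl⟩
      · exact (hid w₂ heq.symm).symm
      rcases List.eq_nil_or_concat w₂ with rfl | ⟨v, j, rfl⟩
      · exact hid _ heq
      rw [List.concat_eq_append, List.concat_eq_append] at heq ⊢
      rw [wordMap_concat, wordMap_concat] at heq
      by_cases hij : i = j
      · subst hij
        have heq' : wordMap f g u = wordMap f g v := by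
          funext y
          obtain ⟨x, rfl⟩ := hsurj i y
          exact congrFun heq x
        have hlen' : u.length + v.length ≤ n := by
          simp only [List.length_concat] at hlen
          omega
        rw [ih u v hlen' heq']
      · exfalso
        fin_cases i <;> fin_cases j
        · exact hij rfl
        · simp only [Matrix.cons_val_zero, Matrix.cons_val_one, Matrix.head_cons] at heq
          exact noMix a b c d f g ha hc hf hg hsum hpq u v heq
        · simp only [Matrix.cons_val_zero, Matrix.cons_val_one, Matrix.head_cons] at heq
          exact noMix a b c d f g ha hc hf hg hsum hpq v u heq.symm
        · exact hij rfl

/-- **Theorem 2.** Let `f x = a * x + b` and `g x = c * x + d` with `a > 1`, `c > 1`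
and `1/a + 1/c ≤ 1`. Then either `f` and `g` commute, or they generate a free
semigroup of rank 2 with free basis `f, g`. -/
theorem affine_pair_commute_or_free
    (a b c d : ℝ) (f g : ℝ → ℝ)
    (ha : 1 < a) (hc : 1 < c)
    (hf : f = fun x => a * x + b) (hg : g = fun x => c * x + d)
    (hsum : 1 / a + 1 / c ≤ 1) :
    f ∘ g = g ∘ f ∨
      ∀ w₁ w₂ : List (Fin 2),
        (w₁.map ![f, g]).foldr (· ∘ ·) id = (w₂.map ![f, g]).foldr (· ∘ ·) id →
          w₁ = w₂ := by
  by_cases hcom : b / (1 - a) = d / (1 - c)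
  · left
    have h1a : (1:ℝ) - a ≠ 0 := by intro h; linarith
    have h1c : (1:ℝ) - c ≠ 0 := by intro h; linarith
    have hbd : b * (1 - c) = d * (1 - a) := by
      field_simp at hcom
      linarith [hcom]
    funext x
    simp [hf, hg]
    nlinarith [hbd]
  · right
    rcases lt_or_gt_of_ne hcom with hlt | hgt
    · intro w₁ w₂ heq
      exact coreLemma a b c d f g ha hc hf hg hsum hlt
        (w₁.length + w₂.length) w₁ w₂ (le_refl _) heq
    · -- swap the roles of f and g
      have hs : 1 / c + 1 / a ≤ 1 := by linarith
      intro w₁ w₂ heq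
      set σ : Fin 2 → Fin 2 := fun i => i + 1 with hσ
      have hσinj : Function.Injective σ := by decide
      have hswap : ∀ w : List (Fin 2),
          wordMap g f (w.map σ) = wordMap f g w := by
        intro w
        induction w with
        | nil => rfl
        | cons i w ihw =>
            rw [List.map_cons, wordMap_cons, wordMap_cons, ihw]
            have : ![g, f] (σ i) = ![f, g] i := by fin_cases i <;> rfl
            rw [this]
      have heq' : wordMap g f (w₁.map σ) = wordMap g f (w₂.map σ) := by
        rw [hswap, hswap]; exact heq
      have := coreLemma c d a b g f hc ha hg hf hs hgt
        ((w₁.map σ).length + (w₂.map σ).length) _ _ (le_refl _) heq'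
      exact List.map_injective_iff.mpr hσinj this
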